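/- Let A : ℝ^p ⇉ ℝ^p be monotone, Q symmetric positive definite, t > 0, and z̄₊ the exact solution of 0 ∈ t(g + Q(w - z)) + A(w) (for fixed vectors g, z). Suppose z₊ satisfies e ∈ t(g + Q(z₊ - z)) + A(z₊) for some e with ‖e‖*_Q ≤ tδ, where ‖e‖*_Q := ⟨Q⁻¹e, e⟩^{1/2}. Then ‖z₊ - z̄₊‖_Q ≤ δ. -/

import Mathlib

open Matrix

/-- Weighted norm `‖u‖_H := ⟨H u, u⟩^{1/2}`. -/
noncomputable def wnorm {p : ℕ} (H : Matrix (Fin p) (Fin p) ℝ) (u : Fin p → ℝ) : ℝ :=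
  Real.sqrt ((H *ᵥ u) ⬝ᵥ u)

/-- A multivalued operator `A : ℝ^p ⇉ ℝ^p` is monotone. -/
def MonotoneOp {p : ℕ} (A : (Fin p → ℝ) → Set (Fin p → ℝ)) : Prop :=
  ∀ z1 z2 w1 w2 : Fin p → ℝ, w1 ∈ A z1 → w2 ∈ A z2 → 0 ≤ (w1 - w2) ⬝ᵥ (z1 - z2)

lemma wnorm_sq {p : ℕ} {H : Matrix (Fin p) (Fin p) ℝ} (hH : H.PosSemidef)
    (u : Fin p → ℝ) : wnorm H u ^ 2 = (H *ᵥ u) ⬝ᵥ u := by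
  have h0 : 0 ≤ (H *ᵥ u) ⬝ᵥ u := by
    have := hH.dotProduct_mulVec_nonneg u; simpa [dotProduct_comm] using this
  rw [wnorm, Real.sq_sqrt h0]

lemma cauchy_schwarz_posdef {p : ℕ} {Q : Matrix (Fin p) (Fin p) ℝ} (hQ : Q.PosDef)
    (e u : Fin p → ℝ) :
    (e ⬝ᵥ u) ^ 2 ≤ ((Q⁻¹ *ᵥ e) ⬝ᵥ e) * ((Q *ᵥ u) ⬝ᵥ u) := by
  set v := Q⁻¹ *ᵥ e with hv
  have hQv : Q *ᵥ v = e := by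
    rw [hv, mulVec_mulVec, Matrix.mul_nonsing_inv _ (isUnit_iff_isUnit_det _ |>.1 hQ.isUnit),
      one_mulVec]
  have hsym : Qᵀ = Q := by
    have h := hQ.isHermitian
    rw [Matrix.IsHermitian] at h
    simpa using h
  have key : ∀ s : ℝ, 0 ≤ ((v ⬝ᵥ e) * (s * s) + (-(2 * (e ⬝ᵥ u))) * s + (Q *ᵥ u) ⬝ᵥ u) := by
    intro s
    have h0 : 0 ≤ (Q *ᵥ (u - s • v)) ⬝ᵥ (u - s • v) := by
      have := hQ.posSemidef.dotProduct_mulVec_nonneg (u - s • v); simpa [dotProduct_comm] using this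
    have hexp : (Q *ᵥ (u - s • v)) ⬝ᵥ (u - s • v)
        = (v ⬝ᵥ e) * (s * s) + (-(2 * (e ⬝ᵥ u))) * s + (Q *ᵥ u) ⬝ᵥ u := by
      have hQuv : (Q *ᵥ u) ⬝ᵥ v = e ⬝ᵥ u := by
        rw [dotProduct_comm, Matrix.dotProduct_mulVec, ← hsym, Matrix.vecMul_transpose, hQv]
      have hev : e ⬝ᵥ v = v ⬝ᵥ e := dotProduct_comm _ _
      rw [Matrix.mulVec_sub, Matrix.mulVec_smul, hQv]
      simp only [sub_dotProduct, dotProduct_sub, smul_dotProduct, dotProduct_smul,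
        smul_eq_mul, hQuv, hev, dotProduct_comm e u]
      ring
    rw [hexp] at h0; exact h0
  have hd := discrim_le_zero key
  rw [discrim] at hd
  have hve : v ⬝ᵥ e = (Q⁻¹ *ᵥ e) ⬝ᵥ e := rfl
  nlinarith [hd]

/-- An inexact solution `z₊` of the linearized inclusion (with residual `e`,
`‖e‖*_Q ≤ tδ`) satisfies `‖z₊ - z̄₊‖_Q ≤ δ`, where `z̄₊` is the exact solution. -/
theorem inexact_solution_distance {p : ℕ}
    (Q : Matrix (Fin p) (Fin p) ℝ) (hQ : Q.PosDef)
    (A : (Fin p → ℝ) → Set (Fin p → ℝ)) (hA : MonotoneOp A)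
    (t δ : ℝ) (ht : 0 < t) (hδ : 0 ≤ δ)
    (g z zbar zplus e : Fin p → ℝ)
    (hexact : -(t • (g + Q *ᵥ (zbar - z))) ∈ A zbar)
    (happrox : e - t • (g + Q *ᵥ (zplus - z)) ∈ A zplus)
    (he : wnorm Q⁻¹ e ≤ t * δ) :
    wnorm Q (zplus - zbar) ≤ δ := by
  set u := zplus - zbar with hu
  have hmono := hA zplus zbar _ _ happrox hexact
  have hdiff : (e - t • (g + Q *ᵥ (zplus - z))) - (-(t • (g + Q *ᵥ (zbar - z))))
      = e - t • (Q *ᵥ u) := by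
    rw [hu]
    simp [Matrix.mulVec_sub, smul_sub, smul_add]
    abel
  rw [hdiff] at hmono
  have hmono' : t * ((Q *ᵥ u) ⬝ᵥ u) ≤ e ⬝ᵥ u := by
    have : (e - t • (Q *ᵥ u)) ⬝ᵥ u = e ⬝ᵥ u - t * ((Q *ᵥ u) ⬝ᵥ u) := by
      simp [sub_dotProduct, smul_dotProduct]
    rw [this] at hmono; linarith
  set a := wnorm Q u with ha
  set b := wnorm Q⁻¹ e with hb
  have ha0 : 0 ≤ a := Real.sqrt_nonneg _
  have hb0 : 0 ≤ b := Real.sqrt_nonneg _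
  have ha2 : a ^ 2 = (Q *ᵥ u) ⬝ᵥ u := wnorm_sq hQ.posSemidef u
  have hb2 : b ^ 2 = (Q⁻¹ *ᵥ e) ⬝ᵥ e := wnorm_sq hQ.inv.posSemidef e
  have hcs := cauchy_schwarz_posdef hQ e u
  rw [← ha2, ← hb2] at hcs
  have heu : e ⬝ᵥ u ≤ b * a := by
    have hcs' : (e ⬝ᵥ u) ^ 2 ≤ (b * a) ^ 2 := by rw [mul_pow]; exact hcs
    have := Real.sqrt_le_sqrt hcs'
    rw [Real.sqrt_sq_eq_abs, Real.sqrt_sq (mul_nonneg hb0 ha0)] at this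
    exact (le_abs_self _).trans this
  -- t a² ≤ e⬝u ≤ b a ≤ tδ a
  have h1 : t * a ^ 2 ≤ t * δ * a := by
    calc t * a ^ 2 ≤ e ⬝ᵥ u := by rw [ha2]; exact hmono'
    _ ≤ b * a := heu
    _ ≤ t * δ * a := mul_le_mul_of_nonneg_right he ha0
  rcases eq_or_lt_of_le ha0 with h | h
  · rw [← h]; exact hδ
  · have h2 : (t * a) * a ≤ (t * δ) * a := by nlinarith [h1]
    have h3 := le_of_mul_le_mul_right h2 h
    exact le_of_mul_le_mul_left h3 ht
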